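/- Let (u_n)_{n≥1} be a gargantuan sequence of reals with u_n ≠ 0 for all sufficiently large n, let U(z) = ∑_{n≥1} u_n z^n, and let F be analytic in a neighborhood of 0. Define v_n = [z^n] F(U(z)) and w_n = [z^n] F'(U(z)). Then for every integer r ≥ 0, v_n = ∑_{k=0}^{r} w_k u_{n-k} + O(u_{n-r-1}) as n → ∞. -/

import Mathlib

open Filter Finset PowerSeries

/-- A sequence is *gargantuan* if `u (n-1) / u n → 0` and, for every `r`,
`∑_{k=r}^{n-r} |u k * u (n-k)| = O(|u (n-r)|)`. -/
def Gargantuan (u : ℕ → ℝ) : Prop :=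
  Tendsto (fun n => u (n - 1) / u n) atTop (nhds 0) ∧
  ∀ r : ℕ, (fun n => ∑ k ∈ Finset.Icc r (n - r), |u k * u (n - k)|)
      =O[atTop] fun n => |u (n - r)|



lemma coeff_pow_expand (x : PowerSeries ℝ) (k n : ℕ) :
    PowerSeries.coeff (R := ℝ) n (x ^ (k+1)) =
      ∑ m ∈ Finset.range (n+1), PowerSeries.coeff (R := ℝ) m x * PowerSeries.coeff (R := ℝ) (n-m) (x^k) := by
  rw [pow_succ', PowerSeries.coeff_mul, Finset.Nat.sum_antidiagonal_eq_sum_range_succ_mk]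

lemma coeff_pow_zero_of_lt (x : PowerSeries ℝ) (hx : PowerSeries.coeff (R := ℝ) 0 x = 0) :
    ∀ k n : ℕ, n < k → PowerSeries.coeff (R := ℝ) n (x ^ k) = 0 := by
  intro k
  induction k with
  | zero => intro n hn; omega
  | succ k ih =>
    intro n hn
    rw [coeff_pow_expand]
    apply Finset.sum_eq_zero
    intro m hm
    simp only [Finset.mem_range] at hm
    rcases Nat.eq_zero_or_pos m with h0 | h1
    · subst h0; rw [hx, zero_mul]
    · rw [ih (n - m) (by omega), mul_zero]

lemma coeff_pow_zero_of_low (x : PowerSeries ℝ) (d : ℕ)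
    (hx : ∀ j, j < d → PowerSeries.coeff (R := ℝ) j x = 0) :
    ∀ i n : ℕ, n < i * d → PowerSeries.coeff (R := ℝ) n (x ^ i) = 0 := by
  intro i
  induction i with
  | zero => intro n hn; omega
  | succ i ih =>
    intro n hn
    rw [coeff_pow_expand]
    apply Finset.sum_eq_zero
    intro m hm
    simp only [Finset.mem_range] at hm
    rcases lt_or_ge m d with h0 | h1
    · rw [hx m h0, zero_mul]
    · rw [ih (n - m) (by simp only [Nat.succ_mul] at hn; omega), mul_zero]

lemma coeff_pow_congr (x y : PowerSeries ℝ) (d : ℕ)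
    (h : ∀ i, i ≤ d → PowerSeries.coeff (R := ℝ) i x = PowerSeries.coeff (R := ℝ) i y) :
    ∀ k : ℕ, ∀ j, j ≤ d → PowerSeries.coeff (R := ℝ) j (x ^ k) = PowerSeries.coeff (R := ℝ) j (y ^ k) := by
  intro k
  induction k with
  | zero => intro j hj; rfl
  | succ k ih =>
    intro j hj
    rw [coeff_pow_expand, coeff_pow_expand]
    apply Finset.sum_congr rfl
    intro m hm
    simp only [Finset.mem_range] at hm
    rw [h m (by omega), ih (j - m) (by omega)]

lemma abs_coeff_pow_le (x X : PowerSeries ℝ)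
    (h : ∀ i, |PowerSeries.coeff (R := ℝ) i x| ≤ PowerSeries.coeff (R := ℝ) i X) :
    ∀ k n : ℕ, |PowerSeries.coeff (R := ℝ) n (x ^ k)| ≤ PowerSeries.coeff (R := ℝ) n (X ^ k) := by
  intro k
  induction k with
  | zero =>
    intro n
    simp only [pow_zero, PowerSeries.coeff_one]
    split <;> simp
  | succ k ih =>
    intro n
    rw [coeff_pow_expand, coeff_pow_expand]
    calc |∑ m ∈ Finset.range (n+1), PowerSeries.coeff (R := ℝ) m x * PowerSeries.coeff (R := ℝ) (n-m) (x^k)|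
        ≤ ∑ m ∈ Finset.range (n+1), |PowerSeries.coeff (R := ℝ) m x * PowerSeries.coeff (R := ℝ) (n-m) (x^k)| :=
          Finset.abs_sum_le_sum_abs _ _
      _ ≤ ∑ m ∈ Finset.range (n+1), PowerSeries.coeff (R := ℝ) m X * PowerSeries.coeff (R := ℝ) (n-m) (X^k) := by
          apply Finset.sum_le_sum
          intro m _
          rw [abs_mul]
          exact mul_le_mul (h m) (ih (n-m)) (abs_nonneg _) ((abs_nonneg _).trans (h m))

lemma coeff_pow_nonneg (X : PowerSeries ℝ) (h : ∀ i, 0 ≤ PowerSeries.coeff (R := ℝ) i X) :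
    ∀ k n : ℕ, 0 ≤ PowerSeries.coeff (R := ℝ) n (X ^ k) := by
  intro k n
  have := abs_coeff_pow_le X X (fun i => le_of_eq (abs_of_nonneg (h i))) k n
  exact (abs_nonneg _).trans this

lemma coeff_pow_mono (x X : PowerSeries ℝ) (hx : ∀ i, 0 ≤ PowerSeries.coeff (R := ℝ) i x)
    (h : ∀ i, PowerSeries.coeff (R := ℝ) i x ≤ PowerSeries.coeff (R := ℝ) i X) :
    ∀ k n : ℕ, PowerSeries.coeff (R := ℝ) n (x ^ k) ≤ PowerSeries.coeff (R := ℝ) n (X ^ k) := by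
  intro k n
  refine (le_abs_self _).trans (abs_coeff_pow_le x X (fun i => ?_) k n)
  rw [abs_of_nonneg (hx i)]; exact h i


lemma R_lemma (b : ℕ → ℝ) (hb0 : b 0 = 0) (hbnn : ∀ i, 0 ≤ b i)
    (C₁ : ℝ) (hC₁ : 1 ≤ C₁)
    (hP2 : ∀ n, ∑ m ∈ Finset.Icc 1 (n-1), b m * b (n-m) ≤ C₁ * b (n-1)) :
    ∀ K n : ℕ, PowerSeries.coeff (R := ℝ) n ((PowerSeries.mk b) ^ (K+1)) ≤ C₁ ^ K * b (n - K) := by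
  intro K
  induction K with
  | zero => intro n; simp [PowerSeries.coeff_mk]
  | succ K ih =>
    intro n
    rw [coeff_pow_expand]
    have step1 : ∑ m ∈ Finset.range (n+1),
        PowerSeries.coeff (R := ℝ) m (PowerSeries.mk b) * PowerSeries.coeff (R := ℝ) (n-m) ((PowerSeries.mk b)^(K+1))
        ≤ ∑ m ∈ Finset.range (n+1), b m * (C₁ ^ K * b ((n - K) - m)) := by
      apply Finset.sum_le_sum
      intro m hm
      simp only [Finset.mem_range] at hm
      rw [PowerSeries.coeff_mk]
      have h2 : (n - m) - K = (n - K) - m := by omega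
      have := ih (n - m)
      rw [h2] at this
      exact mul_le_mul_of_nonneg_left this (hbnn m)
    have step2 : ∑ m ∈ Finset.range (n+1), b m * (C₁ ^ K * b ((n - K) - m))
        = C₁ ^ K * ∑ m ∈ Finset.Icc 1 ((n-K)-1), b m * b ((n-K) - m) := by
      rw [Finset.mul_sum]
      have hsub : Finset.Icc 1 ((n-K)-1) ⊆ Finset.range (n+1) := by
        intro m hm; simp only [Finset.mem_Icc] at hm; simp only [Finset.mem_range]; omega
      rw [← Finset.sum_subset hsub ?_]
      · apply Finset.sum_congr rfl; intro m _; ring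
      · intro m hm hnm
        simp only [Finset.mem_range] at hm
        simp only [Finset.mem_Icc, not_and_or, not_le] at hnm
        rcases hnm with h | h
        · interval_cases m
          simp [hb0]
        · have h0 : (n - K) - m = 0 := by omega
          simp [h0, hb0]
    calc _ ≤ C₁ ^ K * ∑ m ∈ Finset.Icc 1 ((n-K)-1), b m * b ((n-K) - m) := by
            rw [← step2]; exact step1
      _ ≤ C₁ ^ K * (C₁ * b ((n-K)-1)) := by
            apply mul_le_mul_of_nonneg_left (hP2 (n-K)) (by positivity)
      _ = C₁ ^ (K+1) * b (n - (K+1)) := by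
            rw [show (n - K) - 1 = n - (K+1) from by omega]; ring

lemma shift_lemma (b : ℕ → ℝ) (hbnn : ∀ i, 0 ≤ b i)
    (hbmono : ∀ i j, 1 ≤ i → i ≤ j → b i ≤ b j)
    (ε : ℝ) (hε0 : 0 < ε) (hε1 : ε ≤ 1) (Nε : ℕ)
    (hNε : ∀ n, Nε ≤ n → b (n-1) ≤ ε * b n) :
    ∀ j i, 1 ≤ i → i ≤ j → b i ≤ ε ^ ((j - i) - Nε) * b j := by
  intro j
  induction j with
  | zero => intro i h1 h2; omega
  | succ j ih =>
    intro i h1 h2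
    rcases Nat.lt_or_ge i (j+1) with h | h
    · have hij : i ≤ j := by omega
      have ihh := ih i h1 hij
      rcases Nat.lt_or_ge Nε (j + 1 - i) with hc | hc
      case inr =>
        have e1 : (j - i) - Nε = 0 := by omega
        have e2 : (j + 1 - i) - Nε = 0 := by omega
        rw [e2, pow_zero, one_mul]
        rw [e1, pow_zero, one_mul] at ihh
        exact ihh.trans (hbmono j (j+1) (by omega) (by omega))
      case inl =>
        have hNj : Nε ≤ j + 1 := by omega
        have hstep : b j ≤ ε * b (j+1) := by
          have := hNε (j+1) hNj
          simpa using this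
        have e2 : (j + 1 - i) - Nε = ((j - i) - Nε) + 1 := by omega
        calc b i ≤ ε ^ ((j - i) - Nε) * b j := ihh
          _ ≤ ε ^ ((j - i) - Nε) * (ε * b (j+1)) := by
              apply mul_le_mul_of_nonneg_left hstep (by positivity)
          _ = ε ^ ((j + 1 - i) - Nε) * b (j+1) := by rw [e2]; ring
    · have : i = j + 1 := by omega
      subst this
      simp


lemma claim_lemma (b : ℕ → ℝ) (hb0 : b 0 = 0) (hbpos : ∀ i, 1 ≤ i → 0 < b i)
    (hbmono : ∀ i j, 1 ≤ i → i ≤ j → b i ≤ b j)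
    (C₁ : ℝ) (hC₁ : 1 ≤ C₁)
    (hP2 : ∀ n, ∑ m ∈ Finset.Icc 1 (n-1), b m * b (n-m) ≤ C₁ * b (n-1))
    (hH2 : ∀ s : ℕ, ∃ C₂ : ℝ, ∃ N₂ : ℕ, 0 ≤ C₂ ∧ 2*s+2 ≤ N₂ ∧
      ∀ n, N₂ ≤ n → ∑ m ∈ Finset.Icc s (n-s), b m * b (n-m) ≤ C₂ * b (n-s))
    (ε : ℝ) (hε0 : 0 < ε) (hε1 : ε ≤ 1) (Nε : ℕ)
    (hNε : ∀ n, Nε ≤ n → b (n-1) ≤ ε * b n) :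
    ∀ s : ℕ, ∃ C : ℝ, ∃ N : ℕ, 0 ≤ C ∧ ∀ n, N ≤ n → ∀ k : ℕ,
      PowerSeries.coeff (R := ℝ) n ((PowerSeries.mk (fun i => if i ≤ n - s - 1 then b i else 0)) ^ k)
        ≤ C * (2*C₁*ε) ^ k * b (n - s - 1) := by
  have hbnn : ∀ i, 0 ≤ b i := by
    intro i
    rcases Nat.eq_zero_or_pos i with h | h
    · rw [h, hb0]
    · exact (hbpos i h).le
  set δ : ℝ := 2*C₁*ε with hδdef
  have hδ0 : 0 < δ := by positivity
  have hC₁0 : (0:ℝ) < C₁ := lt_of_lt_of_le one_pos hC₁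
  have hεinv : (1:ℝ) ≤ ε⁻¹ := by
    rw [le_inv_comm₀] <;> simp [hε0, hε1]
  have epow : ∀ (D k e : ℕ), k ≤ e + D → ε ^ e ≤ ε⁻¹ ^ D * ε ^ k := by
    intro D k e h
    have key : ε⁻¹ ^ D * ε ^ (D + e) = ε ^ e := by
      rw [pow_add, ← mul_assoc, ← mul_pow, inv_mul_cancel₀ hε0.ne', one_pow, one_mul]
    calc ε ^ e = ε⁻¹ ^ D * ε ^ (D + e) := key.symm
      _ ≤ ε⁻¹ ^ D * ε ^ k := by
          apply mul_le_mul_of_nonneg_left _ (by positivity)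
          exact pow_le_pow_of_le_one hε0.le hε1 (by omega)
  have hCE : ∀ k : ℕ, C₁ ^ k * ε ^ k ≤ δ ^ k := by
    intro k
    rw [← mul_pow]
    apply pow_le_pow_left₀ (by positivity)
    rw [hδdef]; nlinarith [hε0.le, hC₁0.le]
  have hCEk : ∀ k : ℕ, (k:ℝ) * (C₁ ^ k * ε ^ k) ≤ δ ^ k := by
    intro k
    have h2 : (k:ℝ) ≤ 2 ^ k := by
      exact_mod_cast (Nat.lt_two_pow_self (n := k)).le
    calc (k:ℝ) * (C₁ ^ k * ε ^ k) ≤ 2 ^ k * (C₁ ^ k * ε ^ k) := by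
          apply mul_le_mul_of_nonneg_right h2 (by positivity)
      _ = δ ^ k := by rw [hδdef, ← mul_pow, ← mul_pow, mul_assoc]
  -- the key one-level step
  have key : ∀ (σ : ℕ) (C₀ : ℝ) (N₀ : ℕ), 0 ≤ C₀ →
      (∀ s', s' < σ → ∀ n, N₀ ≤ n → ∀ k : ℕ,
        PowerSeries.coeff (R := ℝ) n ((PowerSeries.mk (fun i => if i ≤ n - s' - 1 then b i else 0)) ^ k)
          ≤ C₀ * δ ^ k * b (n - s' - 1)) →
      ∃ C : ℝ, ∃ N : ℕ, 0 ≤ C ∧ ∀ n, N ≤ n → ∀ k : ℕ,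
        PowerSeries.coeff (R := ℝ) n ((PowerSeries.mk (fun i => if i ≤ n - σ - 1 then b i else 0)) ^ k)
          ≤ C * δ ^ k * b (n - σ - 1) := by
    intro σ C₀ N₀ hC₀ prior
    obtain ⟨C₂, N₂, hC₂0, hN₂, hC₂⟩ := hH2 (σ+1)
    set Sσ : ℝ := ∑ m ∈ Finset.Ioc 0 σ, b m with hSσdef
    have hSσ0 : 0 ≤ Sσ := Finset.sum_nonneg fun m _ => hbnn m
    have hbσ1 : 0 ≤ b (σ+1) := hbnn _
    refine ⟨Sσ*C₀/δ + C₂*ε⁻¹^(Nε+2) + b (σ+1)*ε⁻¹^(Nε+σ+2) + ε⁻¹^(σ+1+N₂+Nε) + 1,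
      N₀ + N₂ + Nε + 3*σ + 10, by positivity, ?_⟩
    intro n hn k
    set cp : ℕ → ℝ := fun i => if i ≤ n - σ - 1 then b i else 0 with hcpdef
    have hcpnn : ∀ i, 0 ≤ cp i := by
      intro i; rw [hcpdef]; dsimp only; split
      · exact hbnn i
      · exact le_refl 0
    have hcple : ∀ i, cp i ≤ b i := by
      intro i; rw [hcpdef]; dsimp only; split
      · exact le_refl _
      · exact hbnn i
    have hcpc : ∀ i, PowerSeries.coeff (R := ℝ) i (PowerSeries.mk cp) = cp i := fun i => PowerSeries.coeff_mk i cp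
    have hbig : 0 ≤ b (n - σ - 1) := hbnn _

    have hCC0 : (0:ℝ) ≤ Sσ*C₀/δ + C₂*ε⁻¹^(Nε+2) + b (σ+1)*ε⁻¹^(Nε+σ+2) + ε⁻¹^(σ+1+N₂+Nε) + 1 := by
      positivity
    -- trivial cases k = 0, 1, and k > n
    rcases k with _ | k
    · rw [pow_zero, PowerSeries.coeff_one, if_neg (by omega)]
      exact mul_nonneg (mul_nonneg hCC0 (by positivity)) hbig
    rcases k with _ | K
    · rw [pow_one, PowerSeries.coeff_mk]
      rw [hcpdef]
      dsimp only
      rw [if_neg (by omega)]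
      exact mul_nonneg (mul_nonneg hCC0 (by positivity)) hbig
    rcases Nat.lt_or_ge n (K+2) with hklarge | hkle
    · rw [coeff_pow_zero_of_lt (PowerSeries.mk cp) (by
        rw [PowerSeries.coeff_mk]; rw [hcpdef]; dsimp only; rw [if_pos (by omega), hb0]) _ _ hklarge]
      exact mul_nonneg (mul_nonneg hCC0 (by positivity)) hbig
    have hmono0 : ∀ i j : ℕ, i ≤ j → b i ≤ b j := by
      intro i j hij
      rcases Nat.eq_zero_or_pos i with h | h
      · rw [h, hb0]; exact hbnn j
      · exact hbmono i j h hij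
    rcases Nat.lt_or_ge (n - K) N₂ with hcr | hmain
    · -- crude regime
      have h1 : PowerSeries.coeff (R := ℝ) n (PowerSeries.mk cp ^ (K+2))
          ≤ PowerSeries.coeff (R := ℝ) n (PowerSeries.mk b ^ (K+2)) := by
        apply coeff_pow_mono
        · intro i; rw [PowerSeries.coeff_mk]; exact hcpnn i
        · intro i; rw [PowerSeries.coeff_mk, PowerSeries.coeff_mk]; exact hcple i
      have h3 := R_lemma b hb0 hbnn C₁ hC₁ hP2 (K+1) n
      have h4 : b (n - (K+1)) ≤ b N₂ := hmono0 _ _ (by omega)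
      have h5 := shift_lemma b hbnn hbmono ε hε0 hε1 Nε hNε (n-σ-1) N₂ (by omega) (by omega)
      have h6 : ε ^ (((n-σ-1) - N₂) - Nε) ≤ ε⁻¹ ^ (σ+1+N₂+Nε) * ε ^ (K+2) :=
        epow _ _ _ (by omega)
      have hpow1 : C₁^(K+1) * ε^(K+2) ≤ δ^(K+2) := by
        calc C₁^(K+1) * ε^(K+2) ≤ C₁^(K+2) * ε^(K+2) := by
              apply mul_le_mul_of_nonneg_right _ (by positivity)
              exact pow_le_pow_right₀ hC₁ (by omega)
          _ ≤ δ^(K+2) := hCE _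
      calc PowerSeries.coeff (R := ℝ) n (PowerSeries.mk cp ^ (K+2))
          ≤ C₁^(K+1) * b (n - (K+1)) := h1.trans h3
        _ ≤ C₁^(K+1) * b N₂ := mul_le_mul_of_nonneg_left h4 (by positivity)
        _ ≤ C₁^(K+1) * (ε ^ (((n-σ-1) - N₂) - Nε) * b (n-σ-1)) :=
            mul_le_mul_of_nonneg_left h5 (by positivity)
        _ ≤ C₁^(K+1) * ((ε⁻¹ ^ (σ+1+N₂+Nε) * ε ^ (K+2)) * b (n-σ-1)) := by
            apply mul_le_mul_of_nonneg_left _ (by positivity)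
            exact mul_le_mul_of_nonneg_right h6 hbig
        _ = ε⁻¹ ^ (σ+1+N₂+Nε) * (C₁^(K+1) * ε ^ (K+2)) * b (n-σ-1) := by ring
        _ ≤ ε⁻¹ ^ (σ+1+N₂+Nε) * δ^(K+2) * b (n-σ-1) := by
            apply mul_le_mul_of_nonneg_right _ hbig
            exact mul_le_mul_of_nonneg_left hpow1 (by positivity)
        _ ≤ (Sσ*C₀/δ + C₂*ε⁻¹^(Nε+2) + b (σ+1)*ε⁻¹^(Nε+σ+2) + ε⁻¹^(σ+1+N₂+Nε) + 1) * δ^(K+2)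
              * b (n-σ-1) := by
            apply mul_le_mul_of_nonneg_right _ hbig
            apply mul_le_mul_of_nonneg_right _ (by positivity)
            have p1 : (0:ℝ) ≤ Sσ*C₀/δ := by positivity
            have p2 : (0:ℝ) ≤ C₂*ε⁻¹^(Nε+2) := by positivity
            have p3 : (0:ℝ) ≤ b (σ+1)*ε⁻¹^(Nε+σ+2) := by positivity
            linarith
    · -- main regime
      set n' : ℕ := n - K with hn'def
      have hn'N₂ : N₂ ≤ n' := hmain
      set bg : ℝ := b (n - σ - 1) with hbgdef
      -- expand coefficient
      rw [coeff_pow_expand]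
      have hXnn : ∀ m : ℕ, 0 ≤ PowerSeries.coeff (R := ℝ) (n-m) (PowerSeries.mk cp ^ (K+1)) := by
        intro m
        apply coeff_pow_nonneg
        intro i; rw [PowerSeries.coeff_mk]; exact hcpnn i
      have hres : ∑ m ∈ Finset.range (n+1),
            PowerSeries.coeff (R := ℝ) m (PowerSeries.mk cp) * PowerSeries.coeff (R := ℝ) (n-m) (PowerSeries.mk cp ^ (K+1))
          = ∑ m ∈ Finset.Ioc 0 (n-σ-1),
            PowerSeries.coeff (R := ℝ) m (PowerSeries.mk cp) * PowerSeries.coeff (R := ℝ) (n-m) (PowerSeries.mk cp ^ (K+1)) := by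
        rw [← Finset.sum_subset (h := ?hsub)]
        case hsub =>
          intro m hm
          simp only [Finset.mem_Ioc] at hm
          simp only [Finset.mem_range]
          omega
        intro m hm hnm
        simp only [Finset.mem_Ioc, not_and_or, not_le, not_lt] at hnm
        rw [PowerSeries.coeff_mk]
        rw [hcpdef]
        dsimp only
        rcases hnm with h | h
        · rw [if_pos (by omega)]
          have : m = 0 := by omega
          rw [this, hb0, zero_mul]
        · rw [if_neg (by omega), zero_mul]
      rw [hres]
      have hsplitIoc : ∑ m ∈ Finset.Ioc 0 σ,
            PowerSeries.coeff (R := ℝ) m (PowerSeries.mk cp) * PowerSeries.coeff (R := ℝ) (n-m) (PowerSeries.mk cp ^ (K+1))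
          + ∑ m ∈ Finset.Ioc σ (n-σ-1),
            PowerSeries.coeff (R := ℝ) m (PowerSeries.mk cp) * PowerSeries.coeff (R := ℝ) (n-m) (PowerSeries.mk cp ^ (K+1))
          = ∑ m ∈ Finset.Ioc 0 (n-σ-1),
            PowerSeries.coeff (R := ℝ) m (PowerSeries.mk cp) * PowerSeries.coeff (R := ℝ) (n-m) (PowerSeries.mk cp ^ (K+1)) :=
        Finset.sum_Ioc_consecutive _ (by omega) (by omega)
      rw [← hsplitIoc]
      -- Sum A : small first part, use `prior`
      have hA : ∑ m ∈ Finset.Ioc 0 σ,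
            PowerSeries.coeff (R := ℝ) m (PowerSeries.mk cp) * PowerSeries.coeff (R := ℝ) (n-m) (PowerSeries.mk cp ^ (K+1))
          ≤ Sσ * (C₀ * δ^(K+1) * bg) := by
        rw [hSσdef, Finset.sum_mul]
        apply Finset.sum_le_sum
        intro m hm
        simp only [Finset.mem_Ioc] at hm
        have hprior := prior (σ - m) (by omega) (n - m) (by omega) (K+1)
        have e : (n-m) - (σ-m) - 1 = n-σ-1 := by omega
        rw [e] at hprior
        rw [← hcpdef] at hprior
        rw [PowerSeries.coeff_mk]
        rw [hcpdef]; dsimp only; rw [if_pos (by omega)]; rw [← hcpdef]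
        have : (n-m) = n - m := rfl
        calc b m * PowerSeries.coeff (R := ℝ) (n-m) (PowerSeries.mk cp ^ (K+1))
            ≤ b m * (C₀ * δ^(K+1) * b (n-σ-1)) :=
              mul_le_mul_of_nonneg_left hprior (hbnn m)
          _ = b m * (C₀ * δ^(K+1) * bg) := by rw [hbgdef]
      -- Sum B : push to uncapped series and use hC₂ / counting
      have hB : ∑ m ∈ Finset.Ioc σ (n-σ-1),
            PowerSeries.coeff (R := ℝ) m (PowerSeries.mk cp) * PowerSeries.coeff (R := ℝ) (n-m) (PowerSeries.mk cp ^ (K+1))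
          ≤ C₁^K * ∑ m ∈ Finset.Ioc σ (n-σ-1), b m * b (n' - m) := by
        rw [Finset.mul_sum]
        apply Finset.sum_le_sum
        intro m hm
        simp only [Finset.mem_Ioc] at hm
        have hcpm : PowerSeries.coeff (R := ℝ) m (PowerSeries.mk cp) = b m := by
          rw [PowerSeries.coeff_mk, hcpdef]; dsimp only; rw [if_pos (by omega)]
        rw [hcpm]
        have hmon : PowerSeries.coeff (R := ℝ) (n-m) (PowerSeries.mk cp ^ (K+1))
            ≤ PowerSeries.coeff (R := ℝ) (n-m) (PowerSeries.mk b ^ (K+1)) := by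
          apply coeff_pow_mono
          · intro i; rw [PowerSeries.coeff_mk]; exact hcpnn i
          · intro i; rw [PowerSeries.coeff_mk, PowerSeries.coeff_mk]; exact hcple i
        have hR := R_lemma b hb0 hbnn C₁ hC₁ hP2 K (n-m)
        have e : (n-m) - K = n' - m := by omega
        rw [e] at hR
        calc b m * PowerSeries.coeff (R := ℝ) (n-m) (PowerSeries.mk cp ^ (K+1))
            ≤ b m * (C₁^K * b (n' - m)) :=
              mul_le_mul_of_nonneg_left (hmon.trans hR) (hbnn m)
          _ = C₁^K * (b m * b (n' - m)) := by ring
      -- split inner sum of Sum B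
      have hsplitB : ∑ m ∈ Finset.Ioc σ (n'-σ-1), b m * b (n' - m)
          + ∑ m ∈ Finset.Ioc (n'-σ-1) (n-σ-1), b m * b (n' - m)
          = ∑ m ∈ Finset.Ioc σ (n-σ-1), b m * b (n' - m) :=
        Finset.sum_Ioc_consecutive _ (by omega) (by omega)
      -- B1 : middle convolution, use hC₂
      have hB1 : ∑ m ∈ Finset.Ioc σ (n'-σ-1), b m * b (n' - m) ≤ C₂ * b (n' - (σ+1)) := by
        have hset : Finset.Ioc σ (n'-σ-1) = Finset.Icc (σ+1) (n' - (σ+1)) := by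
          ext x; simp only [Finset.mem_Ioc, Finset.mem_Icc]; omega
        rw [hset]
        exact hC₂ n' hn'N₂
      have hB1' : b (n' - (σ+1)) ≤ ε⁻¹^(Nε+2) * ε^(K+2) * bg := by
        have hsh := shift_lemma b hbnn hbmono ε hε0 hε1 Nε hNε (n-σ-1) (n' - (σ+1)) (by omega) (by omega)
        have e : ((n-σ-1) - (n' - (σ+1))) - Nε = K - Nε := by omega
        rw [e] at hsh
        have hexp : ε^(K - Nε) ≤ ε⁻¹^(Nε+2) * ε^(K+2) := epow _ _ _ (by omega)
        calc b (n' - (σ+1)) ≤ ε^(K - Nε) * b (n-σ-1) := hsh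
          _ ≤ (ε⁻¹^(Nε+2) * ε^(K+2)) * b (n-σ-1) := mul_le_mul_of_nonneg_right hexp hbig
          _ = ε⁻¹^(Nε+2) * ε^(K+2) * bg := by rw [hbgdef]
      -- B2 : boundary terms, counting
      have hB2 : ∑ m ∈ Finset.Ioc (n'-σ-1) (n-σ-1), b m * b (n' - m)
          ≤ (K:ℝ) * (ε⁻¹^(Nε+σ+2) * ε^(K+2) * bg * b (σ+1)) := by
        have hterm : ∀ m ∈ Finset.Ioc (n'-σ-1) (n-σ-1),
            b m * b (n' - m) ≤ ε⁻¹^(Nε+σ+2) * ε^(K+2) * bg * b (σ+1) := by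
          intro m hm
          simp only [Finset.mem_Ioc] at hm
          rcases Nat.lt_or_ge m n' with hmn' | hmn'
          · have h2nd : b (n' - m) ≤ b (σ+1) := hmono0 _ _ (by omega)
            have h1st : b m ≤ ε⁻¹^(Nε+σ+2) * ε^(K+2) * bg := by
              rcases Nat.lt_or_ge (K+2) (σ+2) with hks | hks
              · have hbm : b m ≤ b (n-σ-1) := hmono0 _ _ (by omega)
                have hfac : (1:ℝ) ≤ ε⁻¹^(Nε+σ+2) * ε^(K+2) := by
                  have h1 : ε⁻¹^(K+2) * ε^(K+2) = 1 := by
                    rw [← mul_pow, inv_mul_cancel₀ hε0.ne', one_pow]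
                  have h2 : ε⁻¹^(K+2) ≤ ε⁻¹^(Nε+σ+2) := pow_le_pow_right₀ hεinv (by omega)
                  calc (1:ℝ) = ε⁻¹^(K+2) * ε^(K+2) := h1.symm
                    _ ≤ ε⁻¹^(Nε+σ+2) * ε^(K+2) := mul_le_mul_of_nonneg_right h2 (by positivity)
                calc b m ≤ b (n-σ-1) := hbm
                  _ = 1 * bg := by rw [hbgdef, one_mul]
                  _ ≤ ε⁻¹^(Nε+σ+2) * ε^(K+2) * bg := by
                      apply mul_le_mul_of_nonneg_right hfac
                      rw [hbgdef] at *; exact hbig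
              · have hbm : b m ≤ b (n'-1) := hmono0 _ _ (by omega)
                have hsh := shift_lemma b hbnn hbmono ε hε0 hε1 Nε hNε (n-σ-1) (n'-1) (by omega) (by omega)
                have hexp : ε^(((n-σ-1) - (n'-1)) - Nε) ≤ ε⁻¹^(Nε+σ+2) * ε^(K+2) :=
                  epow _ _ _ (by omega)
                calc b m ≤ b (n'-1) := hbm
                  _ ≤ ε^(((n-σ-1) - (n'-1)) - Nε) * b (n-σ-1) := hsh
                  _ ≤ (ε⁻¹^(Nε+σ+2) * ε^(K+2)) * b (n-σ-1) := mul_le_mul_of_nonneg_right hexp hbig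
                  _ = ε⁻¹^(Nε+σ+2) * ε^(K+2) * bg := by rw [hbgdef]
            calc b m * b (n' - m) ≤ (ε⁻¹^(Nε+σ+2) * ε^(K+2) * bg) * b (σ+1) :=
                  mul_le_mul h1st h2nd (hbnn _) (by positivity)
              _ = ε⁻¹^(Nε+σ+2) * ε^(K+2) * bg * b (σ+1) := by ring
          · have h0 : n' - m = 0 := by omega
            rw [h0, hb0, mul_zero]
            positivity
        calc ∑ m ∈ Finset.Ioc (n'-σ-1) (n-σ-1), b m * b (n' - m)
            ≤ (Finset.Ioc (n'-σ-1) (n-σ-1)).card • (ε⁻¹^(Nε+σ+2) * ε^(K+2) * bg * b (σ+1)) :=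
              Finset.sum_le_card_nsmul _ _ _ hterm
          _ = ((Finset.Ioc (n'-σ-1) (n-σ-1)).card : ℝ) * (ε⁻¹^(Nε+σ+2) * ε^(K+2) * bg * b (σ+1)) := by
              rw [nsmul_eq_mul]
          _ ≤ (K:ℝ) * (ε⁻¹^(Nε+σ+2) * ε^(K+2) * bg * b (σ+1)) := by
              apply mul_le_mul_of_nonneg_right _ (by positivity)
              rw [Nat.card_Ioc]
              have : (n-σ-1) - (n'-σ-1) ≤ K := by omega
              exact_mod_cast this
      -- power comparisons
      have hpowA : C₁^K * ε^(K+2) ≤ δ^(K+2) := by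
        calc C₁^K * ε^(K+2) ≤ C₁^(K+2) * ε^(K+2) := by
              apply mul_le_mul_of_nonneg_right _ (by positivity)
              exact pow_le_pow_right₀ hC₁ (by omega)
          _ ≤ δ^(K+2) := hCE _
      have hpowB : (K:ℝ) * (C₁^K * ε^(K+2)) ≤ δ^(K+2) := by
        have h1 : (K:ℝ) * (C₁^K * ε^(K+2)) ≤ ((K+2:ℕ):ℝ) * (C₁^(K+2) * ε^(K+2)) := by
          apply mul_le_mul (by exact_mod_cast Nat.le_add_right K 2)
          · apply mul_le_mul_of_nonneg_right _ (by positivity)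
            exact pow_le_pow_right₀ hC₁ (by omega)
          · positivity
          · positivity
        exact h1.trans (hCEk (K+2))
      -- assemble
      have hAfin : Sσ * (C₀ * δ^(K+1) * bg) = (Sσ*C₀/δ) * δ^(K+2) * bg := by
        field_simp
        ring
      have hB1fin : C₁^K * (C₂ * (ε⁻¹^(Nε+2) * ε^(K+2) * bg)) ≤ (C₂*ε⁻¹^(Nε+2)) * δ^(K+2) * bg := by
        have : C₁^K * (C₂ * (ε⁻¹^(Nε+2) * ε^(K+2) * bg)) = (C₂*ε⁻¹^(Nε+2)*bg) * (C₁^K * ε^(K+2)) := by ring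
        rw [this]
        have h2 : (C₂*ε⁻¹^(Nε+2)*bg) * (C₁^K * ε^(K+2)) ≤ (C₂*ε⁻¹^(Nε+2)*bg) * δ^(K+2) := by
          apply mul_le_mul_of_nonneg_left hpowA
          have : 0 ≤ bg := hbig
          positivity
        calc (C₂*ε⁻¹^(Nε+2)*bg) * (C₁^K * ε^(K+2)) ≤ (C₂*ε⁻¹^(Nε+2)*bg) * δ^(K+2) := h2
          _ = (C₂*ε⁻¹^(Nε+2)) * δ^(K+2) * bg := by ring
      have hB2fin : C₁^K * ((K:ℝ) * (ε⁻¹^(Nε+σ+2) * ε^(K+2) * bg * b (σ+1)))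
          ≤ (b (σ+1) * ε⁻¹^(Nε+σ+2)) * δ^(K+2) * bg := by
        have heq : C₁^K * ((K:ℝ) * (ε⁻¹^(Nε+σ+2) * ε^(K+2) * bg * b (σ+1)))
            = (ε⁻¹^(Nε+σ+2) * bg * b (σ+1)) * ((K:ℝ) * (C₁^K * ε^(K+2))) := by ring
        rw [heq]
        have h2 : (ε⁻¹^(Nε+σ+2) * bg * b (σ+1)) * ((K:ℝ) * (C₁^K * ε^(K+2)))
            ≤ (ε⁻¹^(Nε+σ+2) * bg * b (σ+1)) * δ^(K+2) := by
          apply mul_le_mul_of_nonneg_left hpowB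
          have h3 : 0 ≤ bg := hbig
          positivity
        calc (ε⁻¹^(Nε+σ+2) * bg * b (σ+1)) * ((K:ℝ) * (C₁^K * ε^(K+2)))
            ≤ (ε⁻¹^(Nε+σ+2) * bg * b (σ+1)) * δ^(K+2) := h2
          _ = (b (σ+1) * ε⁻¹^(Nε+σ+2)) * δ^(K+2) * bg := by ring
      have hC₁Knn : (0:ℝ) ≤ C₁^K := by positivity
      have hBtot : ∑ m ∈ Finset.Ioc σ (n-σ-1),
            PowerSeries.coeff (R := ℝ) m (PowerSeries.mk cp) * PowerSeries.coeff (R := ℝ) (n-m) (PowerSeries.mk cp ^ (K+1))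
          ≤ (C₂*ε⁻¹^(Nε+2)) * δ^(K+2) * bg + (b (σ+1) * ε⁻¹^(Nε+σ+2)) * δ^(K+2) * bg := by
        calc ∑ m ∈ Finset.Ioc σ (n-σ-1),
              PowerSeries.coeff (R := ℝ) m (PowerSeries.mk cp) * PowerSeries.coeff (R := ℝ) (n-m) (PowerSeries.mk cp ^ (K+1))
            ≤ C₁^K * ∑ m ∈ Finset.Ioc σ (n-σ-1), b m * b (n' - m) := hB
          _ = C₁^K * (∑ m ∈ Finset.Ioc σ (n'-σ-1), b m * b (n' - m)
              + ∑ m ∈ Finset.Ioc (n'-σ-1) (n-σ-1), b m * b (n' - m)) := by rw [hsplitB]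
          _ = C₁^K * ∑ m ∈ Finset.Ioc σ (n'-σ-1), b m * b (n' - m)
              + C₁^K * ∑ m ∈ Finset.Ioc (n'-σ-1) (n-σ-1), b m * b (n' - m) := by ring
          _ ≤ C₁^K * (C₂ * (ε⁻¹^(Nε+2) * ε^(K+2) * bg))
              + C₁^K * ((K:ℝ) * (ε⁻¹^(Nε+σ+2) * ε^(K+2) * bg * b (σ+1))) := by
              apply add_le_add
              · apply mul_le_mul_of_nonneg_left _ hC₁Knn
                calc ∑ m ∈ Finset.Ioc σ (n'-σ-1), b m * b (n' - m)
                    ≤ C₂ * b (n' - (σ+1)) := hB1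
                  _ ≤ C₂ * (ε⁻¹^(Nε+2) * ε^(K+2) * bg) := mul_le_mul_of_nonneg_left hB1' hC₂0
              · exact mul_le_mul_of_nonneg_left hB2 hC₁Knn
          _ ≤ (C₂*ε⁻¹^(Nε+2)) * δ^(K+2) * bg + (b (σ+1) * ε⁻¹^(Nε+σ+2)) * δ^(K+2) * bg :=
              add_le_add hB1fin hB2fin
      have hfinal : Sσ * (C₀ * δ^(K+1) * bg)
          + ((C₂*ε⁻¹^(Nε+2)) * δ^(K+2) * bg + (b (σ+1) * ε⁻¹^(Nε+σ+2)) * δ^(K+2) * bg)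
          ≤ (Sσ*C₀/δ + C₂*ε⁻¹^(Nε+2) + b (σ+1)*ε⁻¹^(Nε+σ+2) + ε⁻¹^(σ+1+N₂+Nε) + 1) * δ^(K+2) * bg := by
        rw [hAfin]
        have hrest : (0:ℝ) ≤ (ε⁻¹^(σ+1+N₂+Nε) + 1) * (δ^(K+2) * bg) := by
          have h3 : 0 ≤ bg := hbig
          positivity
        have hexpand : (Sσ*C₀/δ + C₂*ε⁻¹^(Nε+2) + b (σ+1)*ε⁻¹^(Nε+σ+2) + ε⁻¹^(σ+1+N₂+Nε) + 1)
              * δ^(K+2) * bg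
            = (Sσ*C₀/δ) * δ^(K+2) * bg + ((C₂*ε⁻¹^(Nε+2)) * δ^(K+2) * bg
              + (b (σ+1) * ε⁻¹^(Nε+σ+2)) * δ^(K+2) * bg)
              + (ε⁻¹^(σ+1+N₂+Nε) + 1) * (δ^(K+2) * bg) := by ring
        rw [hexpand]
        linarith [hrest]
      calc ∑ m ∈ Finset.Ioc 0 σ,
            PowerSeries.coeff (R := ℝ) m (PowerSeries.mk cp) * PowerSeries.coeff (R := ℝ) (n-m) (PowerSeries.mk cp ^ (K+1))
          + ∑ m ∈ Finset.Ioc σ (n-σ-1),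
            PowerSeries.coeff (R := ℝ) m (PowerSeries.mk cp) * PowerSeries.coeff (R := ℝ) (n-m) (PowerSeries.mk cp ^ (K+1))
          ≤ Sσ * (C₀ * δ^(K+1) * bg)
            + ((C₂*ε⁻¹^(Nε+2)) * δ^(K+2) * bg + (b (σ+1) * ε⁻¹^(Nε+σ+2)) * δ^(K+2) * bg) :=
            add_le_add hA hBtot
        _ ≤ (Sσ*C₀/δ + C₂*ε⁻¹^(Nε+2) + b (σ+1)*ε⁻¹^(Nε+σ+2) + ε⁻¹^(σ+1+N₂+Nε) + 1) * δ^(K+2)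
              * b (n-σ-1) := by rw [hbgdef] at hfinal ⊢; exact hfinal

  -- uniform claim for all levels ≤ s by induction
  have claim_all : ∀ s : ℕ, ∃ C : ℝ, ∃ N : ℕ, 0 ≤ C ∧ ∀ s', s' ≤ s → ∀ n, N ≤ n → ∀ k : ℕ,
      PowerSeries.coeff (R := ℝ) n ((PowerSeries.mk (fun i => if i ≤ n - s' - 1 then b i else 0)) ^ k)
        ≤ C * δ ^ k * b (n - s' - 1) := by
    intro s
    induction s with
    | zero =>
      obtain ⟨C, N, hC, h⟩ := key 0 0 0 le_rfl (by intro s' hs'; omega)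
      exact ⟨C, N, hC, by intro s' hs'; interval_cases s'; exact h⟩
    | succ s ih =>
      obtain ⟨C, N, hC, h⟩ := ih
      obtain ⟨C', N', hC', h'⟩ := key (s+1) C N hC (fun s' hs' => h s' (by omega))
      refine ⟨max C C', max N N', le_max_of_le_left hC, ?_⟩
      intro s' hs' n hn k
      rcases Nat.lt_or_ge s' (s+1) with hlt | hge
      · calc _ ≤ C * δ ^ k * b (n - s' - 1) := h s' (by omega) n (le_trans (le_max_left _ _) hn) k
          _ ≤ max C C' * δ ^ k * b (n - s' - 1) := by
              apply mul_le_mul_of_nonneg_right _ (hbnn _)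
              exact mul_le_mul_of_nonneg_right (le_max_left _ _) (by positivity)
      · have : s' = s + 1 := by omega
        subst this
        calc _ ≤ C' * δ ^ k * b (n - (s+1) - 1) := h' n (le_trans (le_max_right _ _) hn) k
          _ ≤ max C C' * δ ^ k * b (n - (s+1) - 1) := by
              apply mul_le_mul_of_nonneg_right _ (hbnn _)
              exact mul_le_mul_of_nonneg_right (le_max_right _ _) (by positivity)
  intro s
  obtain ⟨C, N, hC, h⟩ := claim_all s
  exact ⟨C, N, hC, fun n hn k => h s le_rfl n hn k⟩


/-- **Bender's theorem** (simplified form). Let `(u n)` be gargantuan with `u 0 = 0`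
and `u n ≠ 0` for all large `n`, let `U(z) = ∑_{n≥1} u n zⁿ`, and let
`F(x) = ∑_k c k x^k` be analytic near `0`. With `v n = [zⁿ] F(U(z))` and
`w n = [zⁿ] F'(U(z))` (expressed by the finite coefficientwise sums below, since
`U` has zero constant term), for every `r ≥ 0` we have
`v n = ∑_{k=0}^{r} w k * u (n-k) + O(u (n-r-1))`. -/
theorem bender (u : ℕ → ℝ) (hu0 : u 0 = 0) (hgarg : Gargantuan u)
    (hne : ∀ᶠ n in atTop, u n ≠ 0)
    (c : ℕ → ℝ) (hanalytic : ∃ ρ : ℝ, 0 < ρ ∧ Summable fun k => |c k| * ρ ^ k)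
    (v w : ℕ → ℝ)
    (hv : ∀ n, v n = ∑ k ∈ Finset.range (n + 1),
      c k * PowerSeries.coeff (R := ℝ) n ((PowerSeries.mk u) ^ k))
    (hw : ∀ n, w n = ∑ k ∈ Finset.range (n + 1),
      ((k + 1 : ℕ) : ℝ) * c (k + 1) * PowerSeries.coeff (R := ℝ) n ((PowerSeries.mk u) ^ k)) :
    ∀ r : ℕ,
      (fun n => v n - ∑ k ∈ Finset.range (r + 1), w k * u (n - k))
        =O[atTop] fun n => u (n - (r + 1)) := by
  obtain ⟨Nne, hNne⟩ := eventually_atTop.mp hne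
  -- ratio property
  have heps : ∀ ε' : ℝ, 0 < ε' → ∃ N : ℕ, ∀ n, N ≤ n → |u (n-1)| ≤ ε' * |u n| := by
    intro ε' hε'
    obtain ⟨N1, hN1⟩ := Metric.tendsto_atTop.mp hgarg.1 ε' hε'
    refine ⟨max N1 Nne, fun n hn => ?_⟩
    have hu := hNne n (le_trans (le_max_right _ _) hn)
    have hd := hN1 n (le_trans (le_max_left _ _) hn)
    rw [Real.dist_eq, sub_zero, abs_div] at hd
    have hpos : 0 < |u n| := abs_pos.mpr hu
    calc |u (n-1)| = (|u (n-1)| / |u n|) * |u n| := by field_simp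
      _ ≤ ε' * |u n| := mul_le_mul_of_nonneg_right hd.le (abs_nonneg _)
  obtain ⟨Nhalf, hNhalf⟩ := heps (1/2) (by norm_num)
  set N₁ : ℕ := max Nhalf (max Nne 1) with hN₁def
  have hN₁1 : 1 ≤ N₁ := le_max_of_le_right (le_max_right _ _)
  have hNhalf' : ∀ n, N₁ ≤ n → |u (n-1)| ≤ (1/2) * |u n| :=
    fun n hn => hNhalf n (le_trans (le_max_left _ _) hn)
  have hune : ∀ n, N₁ ≤ n → u n ≠ 0 :=
    fun n hn => hNne n (le_trans (le_max_of_le_right (le_max_left _ _)) hn)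
  have amono : ∀ i j, N₁ ≤ i → i ≤ j → |u i| ≤ |u j| := by
    intro i j hi hij
    induction j, hij using Nat.le_induction with
    | base => exact le_rfl
    | succ j hij ih =>
      refine ih.trans ?_
      have h := hNhalf' (j+1) (by omega)
      simp only [Nat.add_sub_cancel] at h
      have := abs_nonneg (u (j+1))
      linarith
  have agrow : ∀ m : ℕ, 2^m * |u N₁| ≤ |u (N₁ + m)| := by
    intro m
    induction m with
    | zero => simp
    | succ m ih =>
      have h2 : |u (N₁ + m)| ≤ (1/2) * |u (N₁ + m + 1)| := by
        have h := hNhalf' (N₁+m+1) (by omega)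
        simpa using h
      rw [pow_succ]
      calc 2^m * 2 * |u N₁| = 2 * (2^m * |u N₁|) := by ring
        _ ≤ 2 * |u (N₁ + m)| := by linarith
        _ ≤ |u (N₁ + (m+1))| := by rw [show N₁ + (m+1) = N₁ + m + 1 from by omega]; linarith
  set T : ℝ := 1 + ∑ i ∈ Finset.range (N₁+1), |u i| with hTdef
  have hT1 : 1 ≤ T := by
    have : 0 ≤ ∑ i ∈ Finset.range (N₁+1), |u i| := Finset.sum_nonneg fun i _ => abs_nonneg _
    linarith
  have huN₁pos : 0 < |u N₁| := abs_pos.mpr (hune N₁ le_rfl)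
  obtain ⟨m₀, hm₀⟩ := pow_unbounded_of_one_lt (T / |u N₁|) (one_lt_two (α := ℝ))
  set N' : ℕ := N₁ + m₀ with hN'def
  set β : ℝ := |u N'| with hβdef
  have hTβ : T ≤ β := by
    have h1 : T < 2^m₀ * |u N₁| := by
      rw [div_lt_iff₀ huN₁pos] at hm₀; linarith
    exact le_trans h1.le (agrow m₀)
  have hβ1 : 1 ≤ β := le_trans hT1 hTβ
  have hN'1 : 1 ≤ N' := by omega
  have hN'N₁ : N₁ ≤ N' := by omega
  -- the majorant sequence
  set b : ℕ → ℝ := fun i => if i = 0 then 0 else if i < N' then β else |u i| with hbdef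
  have hb0 : b 0 = 0 := by simp only [hbdef, if_pos rfl]
  have hbeq : ∀ i, N' ≤ i → b i = |u i| := by
    intro i hi
    simp only [hbdef]
    rw [if_neg (by omega), if_neg (by omega)]
  have hbsmall : ∀ i, 1 ≤ i → i < N' → b i = β := by
    intro i h1 h2
    simp only [hbdef]
    rw [if_neg (by omega), if_pos h2]
  have hbpos : ∀ i, 1 ≤ i → 0 < b i := by
    intro i hi
    rcases Nat.lt_or_ge i N' with h | h
    · rw [hbsmall i hi h]; linarith
    · rw [hbeq i h]
      calc (0:ℝ) < β := by linarith
        _ = |u N'| := hβdef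
        _ ≤ |u i| := amono N' i hN'N₁ (by omega)
  have hbnn : ∀ i, 0 ≤ b i := by
    intro i
    rcases Nat.eq_zero_or_pos i with h | h
    · rw [h, hb0]
    · exact (hbpos i h).le
  have hbmono : ∀ i j, 1 ≤ i → i ≤ j → b i ≤ b j := by
    intro i j h1 hij
    by_cases hi : i < N' <;> by_cases hj : j < N'
    · rw [hbsmall i h1 hi, hbsmall j (by omega) hj]
    · rw [hbsmall i h1 hi, hbeq j (by omega)]
      calc β = |u N'| := hβdef
        _ ≤ |u j| := amono N' j hN'N₁ (by omega)
    · omega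
    · rw [hbeq i (by omega), hbeq j (by omega)]
      exact amono i j (by omega) hij
  have hbmono0 : ∀ i j, i ≤ j → b i ≤ b j := by
    intro i j hij
    rcases Nat.eq_zero_or_pos i with h | h
    · rw [h, hb0]; exact hbnn j
    · exact hbmono i j h hij
  have hba : ∀ i, |u i| ≤ b i := by
    intro i
    rcases Nat.eq_zero_or_pos i with h | h
    · subst h; rw [hb0]; simp [hu0]
    · by_cases hi : i < N'
      · rw [hbsmall i h hi]
        rcases Nat.lt_or_ge i (N₁+1) with h1 | h1
        · refine le_trans ?_ hTβ
          have hmem : i ∈ Finset.range (N₁+1) := Finset.mem_range.mpr h1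
          have := Finset.single_le_sum (f := fun i => |u i|) (fun j _ => abs_nonneg (u j)) hmem
          rw [hTdef]; linarith
        · calc |u i| ≤ |u N'| := amono i N' (by omega) (by omega)
            _ = β := hβdef.symm
      · rw [hbeq i (by omega)]
  -- transported convolution bounds for b
  have hH2b : ∀ s : ℕ, ∃ C₂ : ℝ, ∃ N₂ : ℕ, 0 ≤ C₂ ∧ 2*s+2 ≤ N₂ ∧
      ∀ n, N₂ ≤ n → ∑ m ∈ Finset.Icc s (n-s), b m * b (n-m) ≤ C₂ * b (n-s) := by
    intro s
    obtain ⟨Ca, hCa⟩ := Asymptotics.isBigO_iff.mp (hgarg.2 s)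
    obtain ⟨Na, hNa⟩ := eventually_atTop.mp hCa
    set Ca' : ℝ := max Ca 0 with hCa'def
    have hCa'0 : 0 ≤ Ca' := le_max_right _ _
    have haSum : ∀ n, Na ≤ n →
        ∑ m ∈ Finset.Icc s (n-s), |u m| * |u (n-m)| ≤ Ca' * |u (n-s)| := by
      intro n hn
      have h := hNa n hn
      rw [Real.norm_eq_abs, Real.norm_eq_abs, abs_abs] at h
      have h2 : ∑ m ∈ Finset.Icc s (n-s), |u m * u (n-m)| ≤ Ca * |u (n-s)| :=
        le_trans (le_abs_self _) h
      have h3 : ∑ m ∈ Finset.Icc s (n-s), |u m| * |u (n-m)|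
          = ∑ m ∈ Finset.Icc s (n-s), |u m * u (n-m)| :=
        Finset.sum_congr rfl fun m _ => (abs_mul _ _).symm
      rw [h3]
      refine h2.trans ?_
      apply mul_le_mul_of_nonneg_right (le_max_left _ _) (abs_nonneg _)
    refine ⟨Ca' + 2*N'*β, Na + 2*N' + 2*s + 4, by positivity, by omega, ?_⟩
    intro n hn
    have hpoint : ∀ m ∈ Finset.Icc s (n-s), b m * b (n-m) ≤
        (if N' ≤ m ∧ m ≤ n - N' then |u m| * |u (n-m)| else β * b (n-s)) := by
      intro m hm
      simp only [Finset.mem_Icc] at hm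
      split
      · next hmid =>
        rw [hbeq m hmid.1, hbeq (n-m) (by omega)]
      · next hmid =>
        rw [not_and_or, not_le, not_le] at hmid
        rcases hmid with hsm | hsm
        · have hb1 : b m ≤ β := by
            rcases Nat.eq_zero_or_pos m with h0 | h0
            · rw [h0, hb0]; linarith
            · rw [hbsmall m h0 hsm]
          have hb2 : b (n-m) ≤ b (n-s) := hbmono0 _ _ (by omega)
          exact mul_le_mul hb1 hb2 (hbnn _) (by linarith)
        · have hb1 : b (n-m) ≤ β := by
            rcases Nat.eq_zero_or_pos (n-m) with h0 | h0
            · rw [h0, hb0]; linarith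
            · rw [hbsmall (n-m) h0 (by omega)]
          have hb2 : b m ≤ b (n-s) := hbmono0 _ _ (by omega)
          calc b m * b (n-m) ≤ b (n-s) * β :=
                mul_le_mul hb2 hb1 (hbnn _) (hbnn _)
            _ = β * b (n-s) := by ring
    calc ∑ m ∈ Finset.Icc s (n-s), b m * b (n-m)
        ≤ ∑ m ∈ Finset.Icc s (n-s),
            (if N' ≤ m ∧ m ≤ n - N' then |u m| * |u (n-m)| else β * b (n-s)) :=
          Finset.sum_le_sum hpoint
      _ = ∑ m ∈ (Finset.Icc s (n-s)).filter (fun m => N' ≤ m ∧ m ≤ n - N'), |u m| * |u (n-m)|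
          + ∑ m ∈ (Finset.Icc s (n-s)).filter (fun m => ¬(N' ≤ m ∧ m ≤ n - N')), β * b (n-s) :=
          by rw [Finset.sum_ite]
      _ ≤ Ca' * |u (n-s)| + (2*N') * (β * b (n-s)) := by
          apply add_le_add
          · refine le_trans (Finset.sum_le_sum_of_subset_of_nonneg (Finset.filter_subset _ _)
              (fun i _ _ => mul_nonneg (abs_nonneg _) (abs_nonneg _))) ?_
            exact haSum n (by omega)
          · rw [Finset.sum_const, nsmul_eq_mul]
            apply mul_le_mul_of_nonneg_right _ (by positivity)
            have hsubf : (Finset.Icc s (n-s)).filter (fun m => ¬(N' ≤ m ∧ m ≤ n - N'))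
                ⊆ Finset.range N' ∪ Finset.Ioc (n-N') (n-s) := by
              intro x hx
              simp only [Finset.mem_filter, Finset.mem_Icc, not_and_or, not_le] at hx
              simp only [Finset.mem_union, Finset.mem_range, Finset.mem_Ioc]
              omega
            have hcard : ((Finset.Icc s (n-s)).filter (fun m => ¬(N' ≤ m ∧ m ≤ n - N'))).card
                ≤ 2*N' := by
              refine le_trans (Finset.card_le_card hsubf) ?_
              refine le_trans (Finset.card_union_le _ _) ?_
              rw [Finset.card_range, Nat.card_Ioc]
              omega
            calc (((Finset.Icc s (n-s)).filter (fun m => ¬(N' ≤ m ∧ m ≤ n - N'))).card : ℝ)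
                ≤ ((2*N' : ℕ) : ℝ) := by exact_mod_cast hcard
              _ = 2*N' := by push_cast; ring
      _ ≤ Ca' * b (n-s) + (2*N') * (β * b (n-s)) := by
          have := hba (n-s)
          have h2 : Ca' * |u (n-s)| ≤ Ca' * b (n-s) := mul_le_mul_of_nonneg_left this hCa'0
          linarith
      _ = (Ca' + 2*N'*β) * b (n-s) := by ring
  -- all-n version at level 1
  obtain ⟨C₂1, N₂1, hC₂1nn, hN₂1, hH2b1⟩ := hH2b 1
  have hP2b : ∃ C₁ : ℝ, 1 ≤ C₁ ∧
      ∀ n, ∑ m ∈ Finset.Icc 1 (n-1), b m * b (n-m) ≤ C₁ * b (n-1) := by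
    set g : ℕ → ℝ := fun j => ∑ m ∈ Finset.Icc 1 (j-1), b m * b (j-m) with hgdef
    have hgnn : ∀ j, 0 ≤ g j := fun j => Finset.sum_nonneg fun m _ => mul_nonneg (hbnn _) (hbnn _)
    set C₁ : ℝ := max 1 (C₂1 + ∑ j ∈ Finset.range N₂1, max 0 (g j / b (j-1))) with hC₁def
    have hsum_nn : 0 ≤ ∑ j ∈ Finset.range N₂1, max 0 (g j / b (j-1)) :=
      Finset.sum_nonneg fun j _ => le_max_left _ _
    refine ⟨C₁, le_max_left _ _, ?_⟩
    intro n
    rcases le_or_gt N₂1 n with hn | hn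
    · calc g n ≤ C₂1 * b (n-1) := hH2b1 n hn
        _ ≤ C₁ * b (n-1) := by
            apply mul_le_mul_of_nonneg_right _ (hbnn _)
            calc C₂1 ≤ C₂1 + ∑ j ∈ Finset.range N₂1, max 0 (g j / b (j-1)) := by linarith
              _ ≤ C₁ := le_max_right _ _
    · rcases Nat.lt_or_ge n 2 with hn2 | hn2
      · have hempty : Finset.Icc 1 (n-1) = ∅ := by
          apply Finset.Icc_eq_empty; omega
        show g n ≤ C₁ * b (n-1)
        rw [hgdef]; dsimp only; rw [hempty, Finset.sum_empty]
        have : (0:ℝ) ≤ C₁ := le_trans zero_le_one (le_max_left _ _)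
        positivity
      · have hbpos' : 0 < b (n-1) := hbpos (n-1) (by omega)
        have h1 : g n = (g n / b (n-1)) * b (n-1) := by field_simp
        show g n ≤ C₁ * b (n-1)
        rw [h1]
        apply mul_le_mul_of_nonneg_right _ hbpos'.le
        calc g n / b (n-1) ≤ max 0 (g n / b (n-1)) := le_max_right _ _
          _ ≤ ∑ j ∈ Finset.range N₂1, max 0 (g j / b (j-1)) := by
              apply Finset.single_le_sum (f := fun j => max 0 (g j / b (j-1)))
                (fun j _ => le_max_left _ _)
              exact Finset.mem_range.mpr hn
          _ ≤ C₂1 + ∑ j ∈ Finset.range N₂1, max 0 (g j / b (j-1)) := by linarith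
          _ ≤ C₁ := le_max_right _ _
  obtain ⟨C₁, hC₁1, hP2⟩ := hP2b
  -- choose ε, δ
  obtain ⟨ρ, hρ0, hρsum⟩ := hanalytic
  have hC₁0 : (0:ℝ) < C₁ := lt_of_lt_of_le one_pos hC₁1
  set ε : ℝ := min 1 (ρ / (2*C₁)) with hεdef
  have hε0 : 0 < ε := lt_min one_pos (by positivity)
  have hε1 : ε ≤ 1 := min_le_left _ _
  set δ : ℝ := 2*C₁*ε with hδdef
  have hδ0 : 0 < δ := by positivity
  have hδρ : δ ≤ ρ := by
    rw [hδdef]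
    calc 2*C₁*ε ≤ 2*C₁*(ρ/(2*C₁)) := by
          apply mul_le_mul_of_nonneg_left (min_le_right _ _) (by positivity)
      _ = ρ := by field_simp
  obtain ⟨Nεa, hNεa⟩ := heps ε hε0
  set Nεb : ℕ := max (N'+1) Nεa with hNεbdef
  have hNεb : ∀ n, Nεb ≤ n → b (n-1) ≤ ε * b n := by
    intro n hn
    rw [hbeq (n-1) (by omega), hbeq n (by omega)]
    exact hNεa n (by omega)
  -- summability at δ
  have hsumδ : Summable (fun k => |c k| * δ ^ k) := by
    apply Summable.of_nonneg_of_le (fun k => by positivity) _ hρsum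
    intro k
    apply mul_le_mul_of_nonneg_left _ (abs_nonneg _)
    exact pow_le_pow_left₀ hδ0.le hδρ k
  set S : ℝ := ∑' k, |c k| * δ ^ k with hSdef
  have hS0 : 0 ≤ S := tsum_nonneg fun k => by positivity
  -- main claim
  intro r
  obtain ⟨Ccl, Ncl, hCcl0, hclaim⟩ := claim_lemma b hb0 hbpos hbmono C₁ hC₁1 hP2 hH2b
    ε hε0 hε1 Nεb hNεb r
  set Nfin : ℕ := Ncl + N' + 2*r + 4 with hNfindef
  rw [Asymptotics.isBigO_iff]
  refine ⟨Ccl * S, eventually_atTop.mpr ⟨Nfin, ?_⟩⟩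
  intro n hn
  -- the truncated series
  set q : PowerSeries ℝ := PowerSeries.mk (fun i => if i ≤ n-r-1 then u i else 0) with hqdef
  set t : PowerSeries ℝ := PowerSeries.mk (fun i => if i ≤ n-r-1 then 0 else u i) with htdef
  set p : PowerSeries ℝ := PowerSeries.mk u with hpdef
  have hp0 : PowerSeries.coeff (R := ℝ) 0 p = 0 := by rw [hpdef, PowerSeries.coeff_mk]; exact hu0
  have hpqt : p = q + t := by
    ext i
    rw [map_add, hpdef, hqdef, htdef, PowerSeries.coeff_mk, PowerSeries.coeff_mk,
      PowerSeries.coeff_mk]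
    split <;> ring
  have ht0 : ∀ j, j < n - r → PowerSeries.coeff (R := ℝ) j t = 0 := by
    intro j hj
    rw [htdef, PowerSeries.coeff_mk, if_pos (by omega)]
  have hqp : ∀ k : ℕ, ∀ j, j ≤ n-r-1 →
      PowerSeries.coeff (R := ℝ) j (q ^ k) = PowerSeries.coeff (R := ℝ) j (p ^ k) := by
    apply coeff_pow_congr
    intro i hi
    rw [hqdef, hpdef, PowerSeries.coeff_mk, PowerSeries.coeff_mk, if_pos hi]
  -- the key identity
  have hiden : ∀ k : ℕ, PowerSeries.coeff (R := ℝ) n (p^(k+1)) = PowerSeries.coeff (R := ℝ) n (q^(k+1))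
      + ((k+1:ℕ):ℝ) * ∑ j ∈ Finset.range (r+1), PowerSeries.coeff (R := ℝ) j (p^k) * u (n-j) := by
    intro k
    have hexp : p^(k+1) = ∑ i ∈ Finset.range (k+2), q^i * t^(k+1-i) * ((k+1).choose i : ℝ⟦X⟧) := by
      rw [hpqt, add_pow]
    rw [hexp, map_sum]
    have hterm : ∀ i, PowerSeries.coeff (R := ℝ) n (q^i * t^(k+1-i) * ((k+1).choose i : ℝ⟦X⟧))
        = PowerSeries.coeff (R := ℝ) n (q^i * t^(k+1-i)) * (((k+1).choose i : ℕ) : ℝ) := by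
      intro i
      rw [show (((k+1).choose i : ℕ) : ℝ⟦X⟧) = PowerSeries.C (R := ℝ) (((k+1).choose i : ℕ) : ℝ) from
        (map_natCast (PowerSeries.C (R := ℝ)) _).symm]
      rw [PowerSeries.coeff_mul_C]
    rw [Finset.sum_congr rfl (fun i _ => hterm i)]
    rw [Finset.sum_range_succ, Finset.sum_range_succ]
    have hzero : ∀ i ∈ Finset.range k,
        PowerSeries.coeff (R := ℝ) n (q^i * t^(k+1-i)) * (((k+1).choose i : ℕ) : ℝ) = 0 := by
      intro i hi
      simp only [Finset.mem_range] at hi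
      have hco : PowerSeries.coeff (R := ℝ) n (q^i * t^(k+1-i)) = 0 := by
        rw [PowerSeries.coeff_mul]
        apply Finset.sum_eq_zero
        intro x hx
        rw [Finset.HasAntidiagonal.mem_antidiagonal] at hx
        rw [coeff_pow_zero_of_low t (n-r) ht0 (k+1-i) x.2 (by
          have h2 : 2 ≤ k+1-i := by omega
          have h3 : x.2 ≤ n := by omega
          have h4 : n < 2 * (n-r) := by omega
          calc x.2 ≤ n := h3
            _ < 2 * (n-r) := h4
            _ ≤ (k+1-i) * (n-r) := Nat.mul_le_mul_right _ h2), mul_zero]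
      rw [hco, zero_mul]
    rw [Finset.sum_eq_zero hzero, zero_add]
    have hself : PowerSeries.coeff (R := ℝ) n (q^(k+1) * t^(k+1-(k+1))) * (((k+1).choose (k+1) : ℕ) : ℝ)
        = PowerSeries.coeff (R := ℝ) n (q^(k+1)) := by
      rw [Nat.sub_self, pow_zero, mul_one, Nat.choose_self]
      norm_num
    have hmid : PowerSeries.coeff (R := ℝ) n (q^k * t^(k+1-k)) * (((k+1).choose k : ℕ) : ℝ)
        = ((k+1:ℕ):ℝ) * ∑ j ∈ Finset.range (r+1), PowerSeries.coeff (R := ℝ) j (p^k) * u (n-j) := by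
      rw [show k+1-k = 1 from by omega, pow_one, Nat.choose_succ_self_right]
      have hqt : PowerSeries.coeff (R := ℝ) n (q^k * t)
          = ∑ j ∈ Finset.range (r+1), PowerSeries.coeff (R := ℝ) j (p^k) * u (n-j) := by
        rw [PowerSeries.coeff_mul, Finset.Nat.sum_antidiagonal_eq_sum_range_succ_mk]
        have hsub : Finset.range (r+1) ⊆ Finset.range (n+1) := by
          apply Finset.range_subset_range.mpr; omega
        have hvan : ∀ j ∈ Finset.range (n+1), j ∉ Finset.range (r+1) →
            PowerSeries.coeff (R := ℝ) j (q^k) * PowerSeries.coeff (R := ℝ) (n-j) t = 0 := by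
          intro j hj hnj
          simp only [Finset.mem_range] at hj hnj
          rw [htdef, PowerSeries.coeff_mk, if_pos (by omega), mul_zero]
        rw [← Finset.sum_subset hsub hvan]
        apply Finset.sum_congr rfl
        intro j hj
        simp only [Finset.mem_range] at hj
        rw [hqp k j (by omega)]
        congr 1
        rw [htdef, PowerSeries.coeff_mk, if_neg (by omega)]
      rw [hqt]; ring
    rw [hself, hmid]
    ring
  -- assemble the error formula
  have hE : v n - ∑ k ∈ Finset.range (r + 1), w k * u (n - k)
      = ∑ k ∈ Finset.range n, c (k+1) * PowerSeries.coeff (R := ℝ) n (q^(k+1)) := by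
    have hv' : v n = ∑ k ∈ Finset.range n, c (k+1) * PowerSeries.coeff (R := ℝ) n (p^(k+1))
        + c 0 * PowerSeries.coeff (R := ℝ) n (p^0) := by
      rw [hv n, Finset.sum_range_succ']
    have hp00 : PowerSeries.coeff (R := ℝ) n (p^0) = 0 := by
      rw [pow_zero, PowerSeries.coeff_one, if_neg (by omega)]
    rw [hv', hp00, mul_zero, add_zero]
    have hsplit : ∑ k ∈ Finset.range n, c (k+1) * PowerSeries.coeff (R := ℝ) n (p^(k+1))
        = ∑ k ∈ Finset.range n, c (k+1) * PowerSeries.coeff (R := ℝ) n (q^(k+1))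
        + ∑ k ∈ Finset.range n, ((k+1:ℕ):ℝ) * c (k+1) *
            ∑ j ∈ Finset.range (r+1), PowerSeries.coeff (R := ℝ) j (p^k) * u (n-j) := by
      rw [← Finset.sum_add_distrib]
      apply Finset.sum_congr rfl
      intro k _
      rw [hiden k]
      ring
    rw [hsplit]
    have hswap : ∑ k ∈ Finset.range n, ((k+1:ℕ):ℝ) * c (k+1) *
          ∑ j ∈ Finset.range (r+1), PowerSeries.coeff (R := ℝ) j (p^k) * u (n-j)
        = ∑ j ∈ Finset.range (r+1), w j * u (n-j) := by
      have h1 : ∀ k, ((k+1:ℕ):ℝ) * c (k+1) *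
            ∑ j ∈ Finset.range (r+1), PowerSeries.coeff (R := ℝ) j (p^k) * u (n-j)
          = ∑ j ∈ Finset.range (r+1),
              ((k+1:ℕ):ℝ) * c (k+1) * PowerSeries.coeff (R := ℝ) j (p^k) * u (n-j) := by
        intro k
        rw [Finset.mul_sum]
        apply Finset.sum_congr rfl
        intro j _
        ring
      rw [Finset.sum_congr rfl (fun k _ => h1 k), Finset.sum_comm]
      apply Finset.sum_congr rfl
      intro j hj
      simp only [Finset.mem_range] at hj
      have h2 : ∑ k ∈ Finset.range n, ((k+1:ℕ):ℝ) * c (k+1) * PowerSeries.coeff (R := ℝ) j (p^k) * u (n-j)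
          = (∑ k ∈ Finset.range n, ((k+1:ℕ):ℝ) * c (k+1) * PowerSeries.coeff (R := ℝ) j (p^k)) * u (n-j) := by
        rw [Finset.sum_mul]
      rw [h2]
      congr 1
      rw [hw j]
      have hsub : Finset.range (j+1) ⊆ Finset.range n := by
        apply Finset.range_subset_range.mpr; omega
      have hvan : ∀ k ∈ Finset.range n, k ∉ Finset.range (j+1) →
          ((k+1:ℕ):ℝ) * c (k+1) * PowerSeries.coeff (R := ℝ) j (p^k) = 0 := by
        intro k hk hnk
        simp only [Finset.mem_range] at hk hnk
        rw [coeff_pow_zero_of_lt p hp0 k j (by omega), mul_zero]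
      exact (Finset.sum_subset hsub hvan).symm
    rw [hswap]
    ring
  -- bound the error
  set capB : PowerSeries ℝ := PowerSeries.mk (fun i => if i ≤ n-r-1 then b i else 0) with hcapBdef
  have hqcap : ∀ k : ℕ, |PowerSeries.coeff (R := ℝ) n (q^k)| ≤ PowerSeries.coeff (R := ℝ) n (capB^k) := by
    intro k
    apply abs_coeff_pow_le
    intro i
    rw [hqdef, hcapBdef, PowerSeries.coeff_mk, PowerSeries.coeff_mk]
    split
    · exact hba i
    · simp
  have hclaim' : ∀ k : ℕ, PowerSeries.coeff (R := ℝ) n (capB^k) ≤ Ccl * δ^k * b (n-r-1) := by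
    intro k
    have := hclaim n (by omega) k
    rw [hcapBdef]
    convert this using 3
  have hfinal : |v n - ∑ k ∈ Finset.range (r + 1), w k * u (n - k)|
      ≤ Ccl * S * b (n-r-1) := by
    rw [hE]
    calc |∑ k ∈ Finset.range n, c (k+1) * PowerSeries.coeff (R := ℝ) n (q^(k+1))|
        ≤ ∑ k ∈ Finset.range n, |c (k+1) * PowerSeries.coeff (R := ℝ) n (q^(k+1))| :=
          Finset.abs_sum_le_sum_abs _ _
      _ ≤ ∑ k ∈ Finset.range n, |c (k+1)| * (Ccl * δ^(k+1) * b (n-r-1)) := by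
          apply Finset.sum_le_sum
          intro k _
          rw [abs_mul]
          apply mul_le_mul_of_nonneg_left _ (abs_nonneg _)
          exact (hqcap (k+1)).trans (hclaim' (k+1))
      _ = (∑ k ∈ Finset.range n, |c (k+1)| * δ^(k+1)) * (Ccl * b (n-r-1)) := by
          rw [Finset.sum_mul]
          apply Finset.sum_congr rfl
          intro k _
          ring
      _ ≤ S * (Ccl * b (n-r-1)) := by
          apply mul_le_mul_of_nonneg_right _ (by
            have := hbnn (n-r-1); positivity)
          have h1 : ∑ k ∈ Finset.range n, |c (k+1)| * δ^(k+1)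
              ≤ ∑ k ∈ Finset.range (n+1), |c k| * δ^k := by
            rw [Finset.sum_range_succ']
            have : 0 ≤ |c 0| * δ^0 := by positivity
            linarith
          refine h1.trans ?_
          exact Summable.sum_le_tsum _ (fun k _ => by positivity) hsumδ
      _ = Ccl * S * b (n-r-1) := by ring
  rw [Real.norm_eq_abs, Real.norm_eq_abs]
  have hbu : b (n-r-1) = |u (n - (r+1))| := by
    rw [show n-r-1 = n-(r+1) from by omega]
    exact hbeq _ (by omega)
  rw [← hbu]
  exact hfinal
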